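/- Let G be a finitely presented group (i.e., isomorphic to a presented group on finitely many generators subject to finitely many relators) with finitely many conjugacy classes, and let H be a finitely generated group that is two-sided configuration equivalent to G. Then H is a quotient of G: there exists a surjective group homomorphism from G onto H. -/

import Mathlib

/-- `g` is an ordered generating tuple of `G`. -/
def Generates {G : Type*} [Group G] {n : ℕ} (g : Fin n → G) : Prop :=
  Subgroup.closure (Set.range g) = ⊤

/-- The two-sided configuration set of the configuration pair `(g, c)`: a two-sided
configuration is a tuple `(c₀, (c₁, …, c_n), (c_{n+1}, …, c_{2n}))` of colors realized by
some `x ∈ G`, i.e. `c x = c₀`, `c (gᵢ * x) = cᵢ` and `c (x * gᵢ) = c_{n+i}` for all `i`. -/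
def ConfigT {G : Type*} [Group G] {n m : ℕ} (g : Fin n → G) (c : G → Fin m) :
    Set (Fin m × (Fin n → Fin m) × (Fin n → Fin m)) :=
  { p | ∃ x : G, c x = p.1 ∧ (∀ i, c (g i * x) = p.2.1 i) ∧ (∀ i, c (x * g i) = p.2.2 i) }

/-- Two-sided configuration equivalence of groups. -/
def ConfigTEquiv (G H : Type*) [Group G] [Group H] : Prop :=
  (∀ (n m : ℕ) (g : Fin n → G) (c : G → Fin m), Generates g →
    ∃ (h : Fin n → H) (d : H → Fin m), Generates h ∧ ConfigT g c = ConfigT h d) ∧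
  (∀ (n m : ℕ) (h : Fin n → H) (d : H → Fin m), Generates h →
    ∃ (g : Fin n → G) (c : G → Fin m), Generates g ∧ ConfigT h d = ConfigT g c)

section Foundations

variable {G H : Type*} [Group G] [Group H]

/-- evaluation of a single signed letter -/
def letterEval {n : ℕ} (f : Fin n → G) (p : Fin n × Bool) : G := cond p.2 (f p.1) (f p.1)⁻¹

/-- evaluation of a word given as a list of signed letters -/
def listEval {n : ℕ} (f : Fin n → G) (L : List (Fin n × Bool)) : G :=
  (L.map (letterEval f)).prod

@[simp] lemma listEval_nil {n : ℕ} (f : Fin n → G) : listEval f [] = 1 := rfl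

@[simp] lemma listEval_cons {n : ℕ} (f : Fin n → G) (p : Fin n × Bool) (L : List (Fin n × Bool)) :
    listEval f (p :: L) = letterEval f p * listEval f L := by
  simp [listEval]

lemma lift_eq_listEval {n : ℕ} (f : Fin n → G) (w : FreeGroup (Fin n)) :
    FreeGroup.lift f w = listEval f w.toWord := by
  conv_lhs => rw [← FreeGroup.mk_toWord (x := w)]
  rw [FreeGroup.lift_mk]
  rfl

/-- from equality of two-sided configuration sets: every point on the left has a
"matching point" on the right realizing the same configuration. -/
lemma exists_matching {n m : ℕ} {g : Fin n → G} {c : G → Fin m} {h : Fin n → H} {d : H → Fin m}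
    (EQ : ConfigT g c = ConfigT h d) (x : G) :
    ∃ y : H, d y = c x ∧ (∀ i, d (h i * y) = c (g i * x)) ∧ (∀ i, d (y * h i) = c (x * g i)) := by
  have hx : ((c x, fun i => c (g i * x), fun i => c (x * g i)) :
      Fin m × (Fin n → Fin m) × (Fin n → Fin m)) ∈ ConfigT h d := by
    rw [← EQ]
    exact ⟨x, rfl, fun i => rfl, fun i => rfl⟩
  obtain ⟨y, h1, h2, h3⟩ := hx
  exact ⟨y, h1, h2, h3⟩

/-- coarsening colors preserves equality of configuration sets. -/
lemma ConfigT_comp {n m m' : ℕ} {g : Fin n → G} {c : G → Fin m} {h : Fin n → H} {d : H → Fin m}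
    (EQ : ConfigT g c = ConfigT h d) (π : Fin m → Fin m') :
    ConfigT g (π ∘ c) = ConfigT h (π ∘ d) := by
  ext p
  constructor
  · rintro ⟨x, h1, h2, h3⟩
    obtain ⟨y, g1, g2, g3⟩ := exists_matching EQ x
    exact ⟨y, by simp only [Function.comp_apply, g1]; exact h1,
      fun i => by simp only [Function.comp_apply, g2 i]; exact h2 i,
      fun i => by simp only [Function.comp_apply, g3 i]; exact h3 i⟩
  · rintro ⟨y, h1, h2, h3⟩
    obtain ⟨x, g1, g2, g3⟩ := exists_matching EQ.symm y
    exact ⟨x, by simp only [Function.comp_apply, g1]; exact h1,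
      fun i => by simp only [Function.comp_apply, g2 i]; exact h2 i,
      fun i => by simp only [Function.comp_apply, g3 i]; exact h3 i⟩

end Foundations

section StepCore
variable {G H : Type*} [Group G] [Group H]

/-- If `(h,d)` and `(t,e)` have the same two-sided configuration sets, `d` has singleton
color classes on a finite set `BH`, and `x₀` is a realizer of `y₀`'s color, then walking
any word through the tuple `t` starting at `x₀` tracks the corresponding walk through `h`
starting at `y₀`, as long as the `h`-walk stays inside `BH`. -/
lemma step_core {n m : ℕ} {h : Fin n → H} {d : H → Fin m} {t : Fin n → G} {e : G → Fin m}
    (BH : Finset H) (namePart : Fin m → Option H)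
    (hname : ∀ y ∈ BH, namePart (d y) = some y)
    (hname' : ∀ y : H, y ∉ BH → namePart (d y) = none)
    (EQ : ConfigT h d = ConfigT t e)
    {x₀ : G} {y₀ : H} (hx₀ : e x₀ = d y₀) :
    ∀ L : List (Fin n × Bool), (∀ L' ∈ L.tails, listEval h L' * y₀ ∈ BH) →
      e (listEval t L * x₀) = d (listEval h L * y₀) := by
  -- name-based injectivity
  have dinj : ∀ {u v : H}, u ∈ BH → d u = d v → v = u := by
    intro u v hu huv
    have h1 : namePart (d v) = some u := by rw [← huv, hname u hu]
    by_cases hv : v ∈ BH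
    · rw [hname v hv] at h1
      exact Option.some_injective _ h1
    · rw [hname' v hv] at h1
      exact absurd h1 (by simp)
  -- single step
  have STEP : ∀ (x : G) (y : H), y ∈ BH → e x = d y →
      ∀ p : Fin n × Bool, e (letterEval t p * x) = d (letterEval h p * y) := by
    intro x y hy hxy p
    obtain ⟨j, bb⟩ := p
    cases bb
    · -- inverse letter
      obtain ⟨y', m1, m2, _⟩ := exists_matching EQ.symm ((t j)⁻¹ * x)
      have e1 : t j * ((t j)⁻¹ * x) = x := by group
      have e2 : d (h j * y') = d y := by
        rw [m2 j, e1, hxy]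
      have e3 : h j * y' = y := dinj hy e2.symm
      have e4 : y' = (h j)⁻¹ * y := by rw [← e3]; group
      show e ((t j)⁻¹ * x) = d ((h j)⁻¹ * y)
      rw [← e4, ← m1]
    · -- positive letter
      obtain ⟨y', m1, m2, _⟩ := exists_matching EQ.symm x
      have e2 : y' = y := by
        apply dinj hy
        rw [m1, hxy]
      show e (t j * x) = d (h j * y)
      rw [← m2 j, e2]
  -- induction over the word
  intro L
  induction L with
  | nil => intro _; simpa using hx₀
  | cons p L ih =>
    intro hmem
    have hmemL : ∀ L' ∈ L.tails, listEval h L' * y₀ ∈ BH := by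
      intro L' hL'
      refine hmem L' ?_
      rw [List.tails_cons]
      exact List.mem_cons_of_mem _ hL'
    have hbase : listEval h L * y₀ ∈ BH := by
      refine hmemL L ?_
      rw [List.mem_tails]
    have hstep := STEP (listEval t L * x₀) (listEval h L * y₀) hbase (ih hmemL) p
    rw [listEval_cons, listEval_cons, mul_assoc, mul_assoc]
    exact hstep

end StepCore

section Rigidity
variable {G : Type*} [Group G]

/-- The rigidity core: if `(t, e')` is any generating configuration pair of `G` whose
two-sided configuration set agrees with that of the pair `(a, c)`, where `c` records
membership-with-name in a finite set `Bset` (containing a representative of every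
conjugacy class) together with the conjugacy class, then there is `z*` such that the
`e'`-color class of `c 1` is exactly `{z*}`. -/
lemma rigidity_core [Finite (ConjClasses G)] {n₀ m : ℕ} {a t : Fin n₀ → G} {c e' : G → Fin m}
    (Bset : Finset G)
    (namePart : Fin m → Option G) (kPart : Fin m → ConjClasses G)
    (hname : ∀ x ∈ Bset, namePart (c x) = some x)
    (hname' : ∀ x : G, x ∉ Bset → namePart (c x) = none)
    (hk : ∀ x : G, kPart (c x) = ConjClasses.mk x)
    (hreps : ∀ γ : ConjClasses G, γ.out ∈ Bset)
    (genT : Subgroup.closure (Set.range t) = ⊤)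
    (EQc : ConfigT a c = ConfigT t e') :
    ∃ z : G, e' z = c 1 ∧ ∀ x : G, e' x = c 1 → x = z := by
  classical
  -- name-based injectivity for c
  have cinj : ∀ {u v : G}, u ∈ Bset → c u = c v → v = u := by
    intro u v hu huv
    have h1 : namePart (c v) = some u := by rw [← huv, hname u hu]
    by_cases hv : v ∈ Bset
    · rw [hname v hv] at h1
      exact Option.some_injective _ h1
    · rw [hname' v hv] at h1
      exact absurd h1 (by simp)
  set kt : G → ConjClasses G := fun x => kPart (e' x) with hkt
  -- the two-sided law : kt (g * x) = kt (x * g) for tuple entries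
  have law : ∀ (x : G) (i : Fin n₀), kt (t i * x) = kt (x * t i) := by
    intro x i
    obtain ⟨x', m1, m2, m3⟩ := exists_matching EQc.symm x
    have c1 : IsConj (a i * x') (x' * a i) := by
      rw [isConj_iff]
      exact ⟨x', by group⟩
    have : ConjClasses.mk (a i * x') = ConjClasses.mk (x' * a i) :=
      ConjClasses.mk_eq_mk_iff_isConj.mpr c1
    calc kt (t i * x) = kPart (c (a i * x')) := by
          show kPart (e' (t i * x)) = _
          rw [← m2 i]
      _ = ConjClasses.mk (a i * x') := hk _
      _ = ConjClasses.mk (x' * a i) := this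
      _ = kPart (c (x' * a i)) := (hk _).symm
      _ = kt (x * t i) := by
          show _ = kPart (e' (x * t i))
          rw [← m3 i]
  -- upgrade to all g via the subgroup of elements satisfying the law
  have law2 : ∀ (g x : G), kt (g * x) = kt (x * g) := by
    have hS : ∀ g ∈ Subgroup.closure (Set.range t), ∀ x, kt (g * x) = kt (x * g) := by
      intro g hg
      refine Subgroup.closure_induction ?_ ?_ ?_ ?_ hg
      · rintro g ⟨i, rfl⟩ x
        exact law x i
      · intro x
        rw [one_mul, mul_one]
      · intro g g' _ _ hgl hgl' x
        calc kt (g * g' * x) = kt (g * (g' * x)) := by rw [mul_assoc]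
          _ = kt ((g' * x) * g) := hgl _
          _ = kt (g' * (x * g)) := by rw [mul_assoc]
          _ = kt ((x * g) * g') := hgl' _
          _ = kt (x * (g * g')) := by rw [mul_assoc]
      · intro g _ hgl x
        have h1 := hgl (g⁻¹ * x * g⁻¹)
        have e1 : g * (g⁻¹ * x * g⁻¹) = x * g⁻¹ := by group
        have e2 : (g⁻¹ * x * g⁻¹) * g = g⁻¹ * x := by group
        rw [e1, e2] at h1
        exact h1.symm
    intro g x
    exact hS g (by rw [genT]; trivial) x
  -- kt is a class function
  have kconj : ∀ {u v : G}, IsConj u v → kt u = kt v := by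
    intro u v huv
    obtain ⟨w, hw⟩ := isConj_iff.mp huv
    have h1 := law2 w (u * w⁻¹)
    have e1 : w * (u * w⁻¹) = v := by rw [← hw]; group
    have e2 : (u * w⁻¹) * w = u := by group
    rw [e1, e2] at h1
    exact h1.symm
  -- the induced map on conjugacy classes
  set F : ConjClasses G → ConjClasses G := fun γ => kt γ.out with hF
  have Fmk : ∀ x : G, kt x = F (ConjClasses.mk x) := by
    intro x
    have h1 : ConjClasses.mk ((ConjClasses.mk x).out) = ConjClasses.mk x := Quotient.out_eq _
    exact kconj (ConjClasses.mk_eq_mk_iff_isConj.mp h1.symm)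
  have Fsurj : Function.Surjective F := by
    intro γ
    obtain ⟨y, m1, -, -⟩ := exists_matching EQc γ.out
    refine ⟨ConjClasses.mk y, ?_⟩
    have h1 : kt y = ConjClasses.mk γ.out := by
      show kPart (e' y) = _
      rw [m1, hk]
    rw [← Fmk y, h1]
    exact Quotient.out_eq γ
  have Finj : Function.Injective F := Finite.injective_iff_surjective.mpr Fsurj
  -- singleton classes are mapped to singleton classes
  set Sing : ConjClasses G → Prop := fun γ => ∀ x : G, ConjClasses.mk x = γ → x = γ.out
    with hSing
  have SingF : ∀ γ : ConjClasses G, Sing γ → Sing (F γ) := by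
    intro γ hγ x' hx'
    obtain ⟨y, m1, -, -⟩ := exists_matching EQc x'
    obtain ⟨y2, m21, -, -⟩ := exists_matching EQc ((F γ).out)
    have hy : y = γ.out := by
      apply hγ
      apply Finj
      rw [← Fmk y]
      show kPart (e' y) = F γ
      rw [m1, hk, hx']
    have hy2 : y2 = γ.out := by
      apply hγ
      apply Finj
      rw [← Fmk y2]
      show kPart (e' y2) = F γ
      rw [m21, hk]
      exact Quotient.out_eq _
    have hcc : c ((F γ).out) = c x' := by
      rw [← m21, ← m1, hy, hy2]
    exact cinj (hreps (F γ)) hcc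
  -- a singleton class is sent to the class of 1 by bijectivity on singletons
  haveI : Finite {γ : ConjClasses G // Sing γ} := Subtype.finite
  set σ : {γ : ConjClasses G // Sing γ} → {γ : ConjClasses G // Sing γ} :=
    fun γ => ⟨F γ.1, SingF γ.1 γ.2⟩ with hσ
  have σinj : Function.Injective σ := by
    intro γ δ hγδ
    apply Subtype.ext
    apply Finj
    exact congrArg Subtype.val hγδ
  have σsurj : Function.Surjective σ := Finite.injective_iff_surjective.mp σinj
  have out1 : (ConjClasses.mk (1 : G)).out = 1 := by
    have h1 : ConjClasses.mk ((ConjClasses.mk (1:G)).out) = ConjClasses.mk (1:G) :=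
      Quotient.out_eq _
    exact isConj_one_left.mp (ConjClasses.mk_eq_mk_iff_isConj.mp h1)
  have Sing1 : Sing (ConjClasses.mk (1 : G)) := by
    intro x hx
    rw [out1]
    exact isConj_one_left.mp (ConjClasses.mk_eq_mk_iff_isConj.mp hx)
  obtain ⟨⟨γs, hγs⟩, hγseq⟩ := σsurj ⟨ConjClasses.mk 1, Sing1⟩
  have hFγs : F γs = ConjClasses.mk 1 := congrArg Subtype.val hγseq
  have C1sing : ∀ x : G, e' x = c 1 → x = γs.out := by
    intro x hx
    apply hγs
    apply Finj
    rw [← Fmk x, hFγs]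
    show kPart (e' x) = ConjClasses.mk 1
    rw [hx, hk]
  obtain ⟨y, m1, -, -⟩ := exists_matching EQc 1
  exact ⟨γs.out, by rw [← C1sing y m1]; exact m1, C1sing⟩

end Rigidity

section Pres
variable {n₀ : ℕ} (rels : Finset (FreeGroup (Fin n₀)))

-- canonical quotient hom
noncomputable def qhom : FreeGroup (Fin n₀) →* PresentedGroup (rels : Set (FreeGroup (Fin n₀))) :=
  QuotientGroup.mk' (Subgroup.normalClosure (rels : Set (FreeGroup (Fin n₀))))

lemma qhom_of (j : Fin n₀) : qhom rels (FreeGroup.of j) = PresentedGroup.of j := rfl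

lemma qhom_surjective : Function.Surjective (qhom rels) :=
  QuotientGroup.mk'_surjective _

lemma qhom_rel {r : FreeGroup (Fin n₀)} (hr : r ∈ rels) : qhom rels r = 1 := by
  show QuotientGroup.mk r = 1
  refine (QuotientGroup.eq_one_iff _).mpr ?_
  exact Subgroup.subset_normalClosure hr

lemma freeGroup_closure_range_of :
    Subgroup.closure (Set.range (FreeGroup.of : Fin n₀ → FreeGroup (Fin n₀))) = ⊤ := by
  rw [eq_top_iff]
  intro w _
  induction w using FreeGroup.induction_on with
  | C1 => exact Subgroup.one_mem _
  | of j => exact Subgroup.subset_closure ⟨j, rfl⟩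
  | inv_of j h => exact Subgroup.inv_mem _ (h trivial)
  | mul w₁ w₂ h₁ h₂ => exact Subgroup.mul_mem _ (h₁ trivial) (h₂ trivial)

lemma presented_closure_range_of :
    Subgroup.closure (Set.range (PresentedGroup.of :
      Fin n₀ → PresentedGroup (rels : Set (FreeGroup (Fin n₀))))) = ⊤ := by
  have h1 : Set.range (PresentedGroup.of (rels := (rels : Set (FreeGroup (Fin n₀))))) =
      (qhom rels) '' (Set.range (FreeGroup.of)) := by
    rw [← Set.range_comp]
    rfl
  rw [h1, ← MonoidHom.map_closure, freeGroup_closure_range_of]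
  exact Subgroup.map_top_of_surjective _ (qhom_surjective rels)

end Pres

section Tuple
variable {G : Type*} [Group G] {n₀ : ℕ} (rels : Finset (FreeGroup (Fin n₀)))
  (e : G ≃* PresentedGroup (rels : Set (FreeGroup (Fin n₀))))

noncomputable def aTuple : Fin n₀ → G := fun j => e.symm (PresentedGroup.of j)

lemma lift_aTuple : FreeGroup.lift (aTuple rels e) =
    (e.symm.toMonoidHom).comp (qhom rels) := by
  apply FreeGroup.ext_hom
  intro j
  simp [aTuple, qhom_of]

lemma aTuple_rel {r : FreeGroup (Fin n₀)} (hr : r ∈ rels) :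
    FreeGroup.lift (aTuple rels e) r = 1 := by
  rw [lift_aTuple]
  simp [qhom_rel rels hr]

lemma aTuple_generates : Subgroup.closure (Set.range (aTuple rels e)) = ⊤ := by
  have h1 : Set.range (aTuple rels e) =
      (e.symm.toMonoidHom) '' (Set.range (PresentedGroup.of)) := by
    rw [← Set.range_comp]; rfl
  rw [h1, ← MonoidHom.map_closure, presented_closure_range_of]
  exact Subgroup.map_top_of_surjective _ e.symm.surjective

end Tuple

theorem stmt8 (G H : Type*) [Group G] [Group H] [Group.FG G] [Group.FG H]
    (hfp : ∃ (n : ℕ) (rels : Finset (FreeGroup (Fin n))),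
      Nonempty (G ≃* PresentedGroup (rels : Set (FreeGroup (Fin n)))))
    (hcc : Finite (ConjClasses G))
    (hGH : ConfigTEquiv G H) :
    ∃ φ : G →* H, Function.Surjective φ := by
  classical
  obtain ⟨n₀, rels, ⟨eIso⟩⟩ := hfp
  haveI : Finite (ConjClasses G) := hcc
  haveI : Finite (Quotient (IsConj.setoid G)) := hcc
  have hfinrep : (Set.range (Quotient.out : ConjClasses G → G)).Finite := Set.finite_range _
  -- the canonical generating tuple coming from the presentation
  set a : Fin n₀ → G := aTuple rels eIso with ha
  have genA : Generates a := aTuple_generates rels eIso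
  have hrelA : ∀ r ∈ rels, FreeGroup.lift a r = 1 := fun r hr => aTuple_rel rels eIso hr
  -- the finite "named" subset of G
  set Bset : Finset G :=
    ((rels.biUnion fun r => ((r.toWord.tails).map (listEval a)).toFinset) ∪
      hfinrep.toFinset) ∪ {1} with hBset
  have hreps : ∀ γ : ConjClasses G, γ.out ∈ Bset := by
    intro γ
    rw [hBset]
    refine Finset.mem_union_left _ (Finset.mem_union_right _ ?_)
    rw [Set.Finite.mem_toFinset]
    exact ⟨γ, rfl⟩
  have hsufB : ∀ r ∈ rels, ∀ L' ∈ r.toWord.tails, listEval a L' ∈ Bset := by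
    intro r hr L' hL'
    rw [hBset]
    refine Finset.mem_union_left _ (Finset.mem_union_left _ ?_)
    rw [Finset.mem_biUnion]
    exact ⟨r, hr, by rw [List.mem_toFinset]; exact List.mem_map_of_mem hL'⟩
  -- the coloring of G : name in Bset (if any) together with conjugacy class
  set T := Option {x // x ∈ Bset} × ConjClasses G with hT
  set m : ℕ := Nat.card T with hm
  set ψ : T ≃ Fin m := Finite.equivFin T with hψ
  set cT : G → T := fun x => (if hx : x ∈ Bset then some ⟨x, hx⟩ else none, ConjClasses.mk x)
    with hcT
  set c : G → Fin m := fun x => ψ (cT x) with hc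
  set namePartG : Fin m → Option G := fun v => ((ψ.symm v).1).map Subtype.val with hnp
  set kPartG : Fin m → ConjClasses G := fun v => (ψ.symm v).2 with hkp
  have hname : ∀ x ∈ Bset, namePartG (c x) = some x := by
    intro x hx
    rw [hnp, hc]
    simp only [Equiv.symm_apply_apply, hcT]
    rw [dif_pos hx]
    rfl
  have hname' : ∀ x : G, x ∉ Bset → namePartG (c x) = none := by
    intro x hx
    rw [hnp, hc]
    simp only [Equiv.symm_apply_apply, hcT]
    rw [dif_neg hx]
    rfl
  have hk : ∀ x : G, kPartG (c x) = ConjClasses.mk x := by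
    intro x
    rw [hkp, hc]
    simp only [Equiv.symm_apply_apply, hcT]
  -- first application of the configuration equivalence
  obtain ⟨h, d, genH, EQ1⟩ := hGH.1 n₀ m a c genA
  -- the finite "named" subset of H
  set BH : Finset H :=
    (rels.biUnion fun r => ((r.toWord.tails).map (listEval h)).toFinset) ∪ {1} with hBH
  have h1BH : (1 : H) ∈ BH := by
    rw [hBH]
    exact Finset.mem_union_right _ (Finset.mem_singleton_self 1)
  have hsufH : ∀ r ∈ rels, ∀ L' ∈ r.toWord.tails, listEval h L' ∈ BH := by
    intro r hr L' hL'
    rw [hBH]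
    refine Finset.mem_union_left _ ?_
    rw [Finset.mem_biUnion]
    exact ⟨r, hr, by rw [List.mem_toFinset]; exact List.mem_map_of_mem hL'⟩
  -- the refined coloring of H
  set T₂ := Fin m × Option {y // y ∈ BH} with hT₂
  set m₂ : ℕ := Nat.card T₂ with hm₂
  set ψ₂ : T₂ ≃ Fin m₂ := Finite.equivFin T₂ with hψ₂
  set dT : H → T₂ := fun y => (d y, if hy : y ∈ BH then some ⟨y, hy⟩ else none) with hdT
  set dp : H → Fin m₂ := fun y => ψ₂ (dT y) with hdp
  set namePartH : Fin m₂ → Option H := fun v => ((ψ₂.symm v).2).map Subtype.val with hnpH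
  have hnameH : ∀ y ∈ BH, namePartH (dp y) = some y := by
    intro y hy
    rw [hnpH, hdp]
    simp only [Equiv.symm_apply_apply, hdT]
    rw [dif_pos hy]
    rfl
  have hnameH' : ∀ y : H, y ∉ BH → namePartH (dp y) = none := by
    intro y hy
    rw [hnpH, hdp]
    simp only [Equiv.symm_apply_apply, hdT]
    rw [dif_neg hy]
    rfl
  -- second application of the configuration equivalence
  obtain ⟨t, ep, genT, EQ2⟩ := hGH.2 n₀ m₂ h dp genH
  -- coarsen back to the original colors
  set π : Fin m₂ → Fin m := fun v => (ψ₂.symm v).1 with hπ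
  set e' : G → Fin m := π ∘ ep with he'
  have hπd : π ∘ dp = d := by
    funext y
    rw [Function.comp_apply, hπ, hdp]
    simp only [Equiv.symm_apply_apply, hdT]
  have EQc : ConfigT a c = ConfigT t e' := by
    have h1 := ConfigT_comp EQ2 π
    rw [hπd] at h1
    exact EQ1.trans h1
  -- rigidity: the color class of `c 1` in the `(t, e')` view is a singleton {z}
  obtain ⟨z, hz1, hz2⟩ := rigidity_core Bset namePartG kPartG hname hname' hk hreps genT EQc
  -- relators die on the tuple t
  have deathT : ∀ r ∈ rels, listEval t r.toWord = 1 := by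
    intro r hr
    have hstep := step_core Bset namePartG hname hname' EQc hz1 r.toWord ?_
    · have h1 : listEval a r.toWord = 1 := by
        rw [← lift_eq_listEval]
        exact hrelA r hr
      rw [h1, one_mul] at hstep
      have h2 : listEval t r.toWord * z = z := hz2 _ hstep
      have h3 : listEval t r.toWord * z = 1 * z := by rw [one_mul]; exact h2
      exact mul_right_cancel h3
    · intro L' hL'
      rw [mul_one]
      exact hsufB r hr L' hL'
  -- base point : a realizer of the configuration of 1 ∈ H
  obtain ⟨x₀, hx₀, -, -⟩ := exists_matching EQ2 1
  -- relators die on the tuple h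
  have deathH : ∀ r ∈ (rels : Set (FreeGroup (Fin n₀))), FreeGroup.lift h r = 1 := by
    intro r hr
    rw [Finset.mem_coe] at hr
    have hstep := step_core BH namePartH hnameH hnameH' EQ2 hx₀ r.toWord ?_
    · rw [deathT r hr, one_mul, hx₀] at hstep
      have h1 : namePartH (dp (listEval h r.toWord * 1)) = some 1 := by
        rw [← hstep]
        exact hnameH 1 h1BH
      have h2 : listEval h r.toWord * 1 ∈ BH := by
        rw [mul_one]
        exact hsufH r hr _ (by rw [List.mem_tails])
      rw [hnameH _ h2] at h1
      have h3 := Option.some_injective _ h1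
      rw [lift_eq_listEval]
      rw [mul_one] at h3
      exact h3
    · intro L' hL'
      rw [mul_one]
      exact hsufH r hr L' hL'
  -- assemble the surjection
  set φ : G →* H := (PresentedGroup.toGroup deathH).comp eIso.toMonoidHom with hφ
  refine ⟨φ, ?_⟩
  have himg : ∀ j : Fin n₀, φ (a j) = h j := by
    intro j
    rw [hφ, ha]
    simp only [MonoidHom.comp_apply, MulEquiv.coe_toMonoidHom]
    rw [aTuple]
    rw [MulEquiv.apply_symm_apply]
    exact PresentedGroup.toGroup.of deathH
  have hle : Subgroup.closure (Set.range h) ≤ φ.range := by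
    rw [Subgroup.closure_le]
    rintro y ⟨j, rfl⟩
    exact ⟨a j, himg j⟩
  rw [Generates] at genH
  rw [genH] at hle
  rw [← MonoidHom.range_eq_top]
  exact le_antisymm le_top hle
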